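/- Let u = e_1 + e_n and v = e_0 + e_1 + e_n in C^{n+2} (p, q ≥ 1). For Z = (z_1, ..., z_n) with z_k = a_k + i b_k, the matrix s_{Z,z} maps the line <u> to the line <v> and the line <v> to the line <u> if and only if a_1 + a_n + 1 = 0 and b_1 + b_n = 0 (with a_k, b_k for 2 ≤ k ≤ n-1 and z ∈ R arbitrary). In particular, for every real z there exists such a non-involutive (z ≠ 0) symmetry swapping <u> and <v>, and no s_{Z,z} preserves both lines. -/

import Mathlib

open Complex Matrix ComplexConjugate

noncomputable section

/-- signature entries of the diagonal matrix `I = diag(1^p, (-1)^q)`. -/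
def sgnCR (p k : ℕ) : ℂ := if k < p then 1 else -1

/-- safe indexing of a vector `Z : Fin n → ℂ` by a natural number. -/
def vx {n : ℕ} (Z : Fin n → ℂ) (k : ℕ) : ℂ := if h : k < n then Z ⟨k, h⟩ else 0

/-- the pseudo-Hermitian form `m` of signature `(p+1, q+1)` on `ℂ^{n+2}`. -/
def mForm (n p : ℕ) (u v : Fin (n + 2) → ℂ) : ℂ :=
  u ⟨0, by omega⟩ * conj (v ⟨n + 1, by omega⟩) + u ⟨n + 1, by omega⟩ * conj (v ⟨0, by omega⟩)
    + ∑ k : Fin n, sgnCR p k.val * (u ⟨k.val + 1, by omega⟩ * conj (v ⟨k.val + 1, by omega⟩))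

/-- the matrix `s_{Z,z}` with rows `(-1, -Z, iz + ½ Z I Z^*)`, `(0, E, -I Z^*)`, `(0, 0, -1)`. -/
def sMat (n p : ℕ) (Z : Fin n → ℂ) (z : ℝ) : Matrix (Fin (n + 2)) (Fin (n + 2)) ℂ :=
  Matrix.of fun i j =>
    if i.val = 0 then
      if j.val = 0 then -1
      else if j.val = n + 1 then
        Complex.I * z + (1 / 2) * ∑ k : Fin n, Z k * sgnCR p k.val * conj (Z k)
      else -vx Z (j.val - 1)
    else if i.val = n + 1 then
      if j.val = n + 1 then -1 else 0
    else
      if j.val = 0 then 0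
      else if j.val = n + 1 then -(sgnCR p (i.val - 1) * conj (vx Z (i.val - 1)))
      else if i = j then 1 else 0

lemma uSplit (n : ℕ) (hn : 2 ≤ n) :
    (fun j : Fin (n+2) => if j.val = 1 ∨ j.val = n then (1:ℂ) else 0)
      = Pi.single (⟨1, by omega⟩ : Fin (n+2)) 1 + Pi.single (⟨n, by omega⟩ : Fin (n+2)) 1 := by
  funext j
  simp only [Pi.add_apply, Pi.single_apply, Fin.ext_iff]
  split_ifs <;> simp_all <;> omega

lemma mulVecU (n p : ℕ) (hn : 2 ≤ n) (Z : Fin n → ℂ) (z : ℝ) :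
    (sMat n p Z z).mulVec (fun j => if j.val = 1 ∨ j.val = n then (1:ℂ) else 0)
      = fun i => if i.val = 0 then -(vx Z 0 + vx Z (n-1))
          else if i.val = 1 ∨ i.val = n then 1 else 0 := by
  rw [uSplit n hn, mulVec_add, mulVec_single, mulVec_single]
  funext i
  simp only [Pi.add_apply, mul_one, sMat, of_apply]
  have h1 : (1:ℕ) ≠ 0 := by omega
  have h2 : (1:ℕ) ≠ n + 1 := by omega
  have h3 : n ≠ 0 := by omega
  have h4 : n ≠ n + 1 := by omega
  by_cases hi0 : i.val = 0
  · have hi0' : i = 0 := Fin.ext (by simp [hi0])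
    simp [hi0, hi0', h1, h2, h3, h4, vx]
    exact add_comm _ _
  · have hi0' : ¬ i = 0 := fun h => hi0 (by simp [h])
    by_cases hiN : i.val = n + 1
    · simp [hi0, hi0', hiN, h2, h3, h4]
    · simp only [hi0, hiN, if_false, h1, h2, h3, h4, Fin.ext_iff]
      by_cases e1 : i.val = 1 <;> by_cases e2 : i.val = n <;> simp_all <;> omega

lemma vSplit (n : ℕ) (hn : 2 ≤ n) :
    (fun j : Fin (n+2) => if j.val = 0 ∨ j.val = 1 ∨ j.val = n then (1:ℂ) else 0)
      = Pi.single (⟨0, by omega⟩ : Fin (n+2)) 1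
        + fun j : Fin (n+2) => if j.val = 1 ∨ j.val = n then (1:ℂ) else 0 := by
  funext j
  simp only [Pi.add_apply, Pi.single_apply, Fin.ext_iff]
  split_ifs <;> simp_all <;> omega

lemma mulVecV (n p : ℕ) (hn : 2 ≤ n) (Z : Fin n → ℂ) (z : ℝ) :
    (sMat n p Z z).mulVec (fun j => if j.val = 0 ∨ j.val = 1 ∨ j.val = n then (1:ℂ) else 0)
      = fun i => if i.val = 0 then -1 - (vx Z 0 + vx Z (n-1))
          else if i.val = 1 ∨ i.val = n then 1 else 0 := by
  rw [vSplit n hn, mulVec_add, mulVec_single, mulVecU n p hn]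
  funext i
  simp only [Pi.add_apply, mul_one, sMat, of_apply]
  by_cases hi0 : i.val = 0
  · have hi0' : i = 0 := Fin.ext (by simp [hi0])
    simp [hi0, hi0']; ring
  · have hi0' : ¬ i = 0 := fun h => hi0 (by simp [h])
    by_cases hiN : i.val = n + 1
    · simp [hi0, hi0', hiN]
    · simp [hi0, hi0', hiN]


/-- for `u = e₁ + e_n` and `v = e₀ + e₁ + e_n`, the symmetry `s_{Z,z}` swaps
the lines `⟨u⟩` and `⟨v⟩` if and only if `a₁ + a_n + 1 = 0` and `b₁ + b_n = 0` (writing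
`z_k = a_k + i b_k` for the entries of `Z`, with the other entries and `z` arbitrary).
In particular for every real `z` there is such a symmetry (so also non-involutive ones
with `z ≠ 0`), and no `s_{Z,z}` preserves both lines. -/
theorem example_case3 (n p : ℕ) (hn : 2 ≤ n) (hp : 1 ≤ p) (hq : p + 1 ≤ n) :
    let u : Fin (n + 2) → ℂ := fun j => if j.val = 1 ∨ j.val = n then 1 else 0
    let v : Fin (n + 2) → ℂ := fun j => if j.val = 0 ∨ j.val = 1 ∨ j.val = n then 1 else 0
    (∀ (Z : Fin n → ℂ) (z : ℝ),
      ((∃ c : ℂ, (sMat n p Z z).mulVec u = c • v) ∧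
       (∃ d : ℂ, (sMat n p Z z).mulVec v = d • u)) ↔
      ((vx Z 0).re + (vx Z (n - 1)).re + 1 = 0 ∧ (vx Z 0).im + (vx Z (n - 1)).im = 0)) ∧
    (∀ z : ℝ, ∃ Z : Fin n → ℂ,
      (∃ c : ℂ, (sMat n p Z z).mulVec u = c • v) ∧
      (∃ d : ℂ, (sMat n p Z z).mulVec v = d • u)) ∧
    (∀ (Z : Fin n → ℂ) (z : ℝ),
      ¬((∃ c : ℂ, (sMat n p Z z).mulVec u = c • u) ∧
        (∃ d : ℂ, (sMat n p Z z).mulVec v = d • v))) := by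
  intro u v
  have hu : u = fun j : Fin (n+2) => if j.val = 1 ∨ j.val = n then (1:ℂ) else 0 := rfl
  have hv : v = fun j : Fin (n+2) =>
      if j.val = 0 ∨ j.val = 1 ∨ j.val = n then (1:ℂ) else 0 := rfl
  have hn1 : (1:ℕ) ≠ n := by omega
  have hn0 : (0:ℕ) ≠ n := by omega
  have key : ∀ (Z : Fin n → ℂ) (z : ℝ),
      ((∃ c : ℂ, (sMat n p Z z).mulVec u = c • v) ∧
       (∃ d : ℂ, (sMat n p Z z).mulVec v = d • u)) ↔
      vx Z 0 + vx Z (n-1) = -1 := by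
    intro Z z
    rw [hu, hv, mulVecU n p hn, mulVecV n p hn]
    constructor
    · rintro ⟨⟨c, hc⟩, -⟩
      have h1 := congrFun hc ⟨1, by omega⟩
      have h0 := congrFun hc ⟨0, by omega⟩
      simp at h1 h0
      rw [← h1] at h0
      linear_combination -h0
    · intro hS
      constructor
      · exact ⟨1, by funext i; by_cases hi : i.val = 0 <;>
          simp [hi, hS, show i = 0 ↔ i.val = 0 from ⟨fun h => by simp [h], fun h => Fin.ext (by simp [h])⟩]⟩
      · exact ⟨1, by
          funext i; by_cases hi : i.val = 0 <;> simp [hi, hS, hn0, hn0.symm] <;> ring⟩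
  refine ⟨?_, ?_, ?_⟩
  · intro Z z
    rw [key Z z, Complex.ext_iff]
    simp only [Complex.add_re, Complex.add_im, Complex.neg_re, Complex.neg_im,
      Complex.one_re, Complex.one_im]
    constructor <;> rintro ⟨a, b⟩ <;> constructor <;> linarith
  · intro z
    refine ⟨fun k => if k.val = 0 then -1 else 0, (key _ z).mpr ?_⟩
    simp [vx, show 0 < n by omega, show n - 1 < n by omega, show n - 1 ≠ 0 by omega]
  · rintro Z z ⟨⟨c, hc⟩, ⟨d, hd⟩⟩
    rw [hu, mulVecU n p hn] at hc
    rw [hv, mulVecV n p hn] at hd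
    have hc1 := congrFun hc ⟨1, by omega⟩
    have hc0 := congrFun hc ⟨0, by omega⟩
    have hd1 := congrFun hd ⟨1, by omega⟩
    have hd0 := congrFun hd ⟨0, by omega⟩
    simp [hn0, hn0.symm] at hc1 hc0 hd1 hd0
    have h2 : (-1:ℂ) = 1 := by linear_combination hd0 - hc0 - hd1
    exact absurd h2 (by norm_num)
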